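/- For all integers k and every n ≥ 1: \hat{t}(k, x) ≡ (-1)^{⌊k/n⌋} · \hat{t}(k mod n, x) (mod C(n,x)) in ℤ[x], where \hat{t}(m,x)=2T(m,x/2) and C(n,x) is the minimal polynomial of 2cos(π/n). -/

import Mathlib

open Real Polynomial

/-- For all k ∈ ℤ and n ≥ 1: t̂(k,x) ≡ (-1)^{⌊k/n⌋}·t̂(k mod n, x) (mod C(n,x)), where
t̂(m,x) = 2T(m,x/2) and C(n,x) is the minimal polynomial of 2cos(π/n). -/
theorem that_congruence (n : ℕ) (hn : 1 ≤ n) (k : ℤ) :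
    minpoly ℚ ((2 : ℝ) * Real.cos (π / n)) ∣
      (2 * (Polynomial.Chebyshev.T ℚ k).comp (Polynomial.C (2 : ℚ)⁻¹ * Polynomial.X) -
        Polynomial.C ((-1 : ℚ) ^ (k / (n : ℤ))) *
          (2 * (Polynomial.Chebyshev.T ℚ (k % (n : ℤ))).comp
            (Polynomial.C (2 : ℚ)⁻¹ * Polynomial.X))) := by
  apply minpoly.dvd
  set α : ℝ := (2 : ℝ) * Real.cos (π / n)
  have hT : ∀ m : ℤ, aeval α ((Polynomial.Chebyshev.T ℚ m).comp
      (Polynomial.C (2 : ℚ)⁻¹ * Polynomial.X)) = Real.cos (m * (π / n)) := by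
    intro m
    rw [aeval_comp]
    have h1 : aeval α (Polynomial.C (2 : ℚ)⁻¹ * Polynomial.X) = Real.cos (π / n) := by
      simp only [map_mul, aeval_C, aeval_X, map_inv₀, map_ofNat, α]
      ring
    rw [h1, Polynomial.Chebyshev.aeval_T, Polynomial.Chebyshev.T_real_cos]
  simp only [map_sub, map_mul, map_ofNat, hT, aeval_C]
  have hk : (k : ℝ) * (π / n) = ((k % (n : ℤ) : ℤ) : ℝ) * (π / n) + ((k / (n : ℤ) : ℤ) : ℝ) * π := by
    have hn0 : (n : ℝ) ≠ 0 := by positivity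
    have h := Int.emod_add_mul_ediv k n
    have : (k : ℝ) = ((k % (n : ℤ) : ℤ) : ℝ) + (n : ℝ) * ((k / (n : ℤ) : ℤ) : ℝ) := by
      exact_mod_cast congrArg (fun z : ℤ => (z : ℝ)) h.symm
    rw [this]; field_simp
  rw [hk, Real.cos_add_int_mul_pi]
  rw [show (algebraMap ℚ ℝ) ((-1:ℚ) ^ (k / (n:ℤ))) = (-1:ℝ) ^ (k / (n:ℤ)) by
    rw [map_zpow₀]; norm_num]
  ring
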